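/- arXiv:1605.05089 — 4 statements merged into one kernel-verified Lean document; each statement's English description precedes it below -/
import Mathlib

section
/- Let π be a stationary distribution of M_R and let x ∈ R be a unit. Then π(x) = α / ( |R| · ( ∑_{y∈R, y not a unit} β(y) + α·∑_{y∈Rˣ} β(y) ) ). -/
open Finset

open scoped Classical

/-- The multiplication part `B_R` of the transition matrix:
`B_R(a,b) = ∑_{x ∈ R : a·x = b} β(x)`. -/
noncomputable def Bmat (R : Type) [CommRing R] [Fintype R] (β : R → ℝ) :
    Matrix R R ℝ :=
  fun a b => ∑ x ∈ Finset.univ.filter (fun x => a * x = b), β x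

/-- The transition matrix `M_R(a,b) = α/|R| + (1−α)·B_R(a,b)`. -/
noncomputable def Mmat (R : Type) [CommRing R] [Fintype R] (α : ℝ) (β : R → ℝ) :
    Matrix R R ℝ :=
  fun a b => α / (Fintype.card R : ℝ) + (1 - α) * Bmat R β a b

/-- The annihilator ideal `ann(a) = {x ∈ R : x·a = 0}`. -/
def annId {R : Type} [CommRing R] (a : R) : Ideal R where
  carrier := {x | x * a = 0}
  add_mem' := by
    intro x y hx hy
    simp only [Set.mem_setOf_eq] at *
    rw [add_mul, hx, hy, add_zero]
  zero_mem' := by simp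
  smul_mem' := by
    intro c x hx
    simp only [smul_eq_mul, Set.mem_setOf_eq] at *
    rw [mul_assoc, hx, mul_zero]

/-- The stationary probability of a unit:
`π(x) = α / ( |R|·( ∑_{y∉Rˣ} β(y) + α·∑_{y∈Rˣ} β(y) ) )`. -/
theorem stmt15 (R : Type) [CommRing R] [Fintype R]
    (α : ℝ) (hα0 : 0 < α) (hα1 : α < 1)
    (β : R → ℝ) (hβ : ∀ x, 0 ≤ β x) (hβsum : ∑ x, β x = 1)
    (π : R → ℝ) (hπ0 : ∀ x, 0 ≤ π x) (hπsum : ∑ x, π x = 1)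
    (hπstat : ∀ b : R, ∑ a : R, π a * Mmat R α β a b = π b)
    (x : R) (hx : IsUnit x) :
    π x = α / ((Fintype.card R : ℝ) *
      ((∑ y ∈ Finset.univ.filter (fun y => ¬ IsUnit y), β y) +
        α * ∑ y ∈ Finset.univ.filter (fun y => IsUnit y), β y)) := by
  classical
  set n : ℝ := (Fintype.card R : ℝ) with hn
  have hnpos : (0 : ℝ) < n := by
    rw [hn]; exact_mod_cast Fintype.card_pos
  set U : Finset R := Finset.univ.filter (fun y => IsUnit y) with hU
  set B : ℝ := ∑ y ∈ U, β y with hB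
  set N : ℝ := ∑ y ∈ Finset.univ.filter (fun y => ¬ IsUnit y), β y with hN
  have hmemU : ∀ y : R, y ∈ U ↔ IsUnit y := by
    intro y; simp [hU]
  have hNB : N + B = 1 := by
    rw [hN, hB, hU, add_comm, ← hβsum]
    exact Finset.sum_filter_add_sum_filter_not Finset.univ (fun y => IsUnit y) β
  have hB0 : 0 ≤ B := Finset.sum_nonneg fun y _ => hβ y
  have hN0 : 0 ≤ N := Finset.sum_nonneg fun y _ => hβ y
  have hD : 0 < 1 - (1 - α) * B := by nlinarith
  -- key identity for units
  have key : ∀ z : R, IsUnit z →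
      π z = α / n + (1 - α) * ∑ y ∈ U, β y * π (z * Ring.inverse y) := by
    intro z hz
    have hBsum : ∑ a, π a * Bmat R β a z
        = ∑ y ∈ U, β y * π (z * Ring.inverse y) := by
      calc ∑ a, π a * Bmat R β a z
          = ∑ a, ∑ y, if a * y = z then π a * β y else 0 := by
            refine Finset.sum_congr rfl fun a _ => ?_
            rw [Bmat, Finset.mul_sum, Finset.sum_filter]
        _ = ∑ y, ∑ a, if a * y = z then π a * β y else 0 := Finset.sum_comm
        _ = ∑ y, if IsUnit y then β y * π (z * Ring.inverse y) else 0 := by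
            refine Finset.sum_congr rfl fun y _ => ?_
            by_cases hy : IsUnit y
            · rw [if_pos hy]
              have heq : ∀ a : R, (a * y = z) ↔ (a = z * Ring.inverse y) := by
                intro a
                constructor
                · intro h
                  have h1 : y * Ring.inverse y = 1 := Ring.mul_inverse_cancel y hy
                  calc a = a * (y * Ring.inverse y) := by rw [h1, mul_one]
                    _ = (a * y) * Ring.inverse y := by ring
                    _ = z * Ring.inverse y := by rw [h]
                · intro h
                  subst h
                  rw [mul_assoc, Ring.inverse_mul_cancel y hy, mul_one]
              simp_rw [heq]
              rw [Finset.sum_ite_eq' Finset.univ (z * Ring.inverse y)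
                (fun a => π a * β y)]
              simp [mul_comm]
            · rw [if_neg hy]
              refine Finset.sum_eq_zero fun a _ => ?_
              rw [if_neg]
              intro h
              exact hy (isUnit_of_mul_isUnit_right (h ▸ hz))
        _ = ∑ y ∈ U, β y * π (z * Ring.inverse y) := by
            rw [hU, ← Finset.sum_filter]
    have h2 : ∑ a, π a * Mmat R α β a z
        = α / n + (1 - α) * ∑ a, π a * Bmat R β a z := by
      simp only [Mmat, mul_add, Finset.sum_add_distrib]
      rw [Finset.mul_sum]
      congr 1
      · rw [← Finset.sum_mul, hπsum, one_mul]
      · exact Finset.sum_congr rfl fun a _ => by ring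
    have h1 := hπstat z
    rw [h2, hBsum] at h1
    linarith
  have hUne : U.Nonempty := ⟨1, (hmemU 1).2 isUnit_one⟩
  obtain ⟨xM, hxM, hmax⟩ := Finset.exists_max_image U π hUne
  obtain ⟨xm, hxm, hmin⟩ := Finset.exists_min_image U π hUne
  have hinvU : ∀ (z y : R), IsUnit z → IsUnit y → IsUnit (z * Ring.inverse y) := by
    intro z y hz hy
    exact hz.mul (isUnit_ringInverse.2 hy)
  -- upper bound on the max
  have hMle : π xM ≤ α / n + (1 - α) * (B * π xM) := by
    have hk := key xM ((hmemU xM).1 hxM)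
    have hle : ∑ y ∈ U, β y * π (xM * Ring.inverse y) ≤ ∑ y ∈ U, β y * π xM := by
      refine Finset.sum_le_sum fun y hy => ?_
      have hyu : IsUnit y := (hmemU y).1 hy
      have hmem : xM * Ring.inverse y ∈ U :=
        (hmemU _).2 (hinvU xM y ((hmemU xM).1 hxM) hyu)
      exact mul_le_mul_of_nonneg_left (hmax _ hmem) (hβ y)
    have h1α : (0 : ℝ) ≤ 1 - α := by linarith
    have h3 : π xM ≤ α / n + (1 - α) * ∑ y ∈ U, β y * π xM := by
      calc π xM = α / n + (1 - α) * ∑ y ∈ U, β y * π (xM * Ring.inverse y) := hk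
        _ ≤ α / n + (1 - α) * ∑ y ∈ U, β y * π xM := by
            linarith [mul_le_mul_of_nonneg_left hle h1α]
    rw [← Finset.sum_mul] at h3
    linarith [h3]
  have hmge : α / n + (1 - α) * (B * π xm) ≤ π xm := by
    have hk := key xm ((hmemU xm).1 hxm)
    have hle : ∑ y ∈ U, β y * π xm ≤ ∑ y ∈ U, β y * π (xm * Ring.inverse y) := by
      refine Finset.sum_le_sum fun y hy => ?_
      have hyu : IsUnit y := (hmemU y).1 hy
      have hmem : xm * Ring.inverse y ∈ U :=
        (hmemU _).2 (hinvU xm y ((hmemU xm).1 hxm) hyu)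
      exact mul_le_mul_of_nonneg_left (hmin _ hmem) (hβ y)
    have h1α : (0 : ℝ) ≤ 1 - α := by linarith
    rw [← Finset.sum_mul] at hle
    nlinarith [mul_le_mul_of_nonneg_left hle h1α]
  set c : ℝ := α / (n * (1 - (1 - α) * B)) with hc
  have hMc : π xM ≤ c := by
    rw [hc]
    rw [le_div_iff₀ (by positivity)]
    have : π xM * (1 - (1 - α) * B) ≤ α / n := by nlinarith
    calc π xM * (n * (1 - (1 - α) * B)) = (π xM * (1 - (1 - α) * B)) * n := by ring
      _ ≤ (α / n) * n := mul_le_mul_of_nonneg_right this (le_of_lt hnpos)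
      _ = α := by field_simp
  have hmc : c ≤ π xm := by
    rw [hc, div_le_iff₀ (by positivity)]
    have : α / n ≤ π xm * (1 - (1 - α) * B) := by nlinarith
    calc α = (α / n) * n := by field_simp
      _ ≤ (π xm * (1 - (1 - α) * B)) * n := mul_le_mul_of_nonneg_right this (le_of_lt hnpos)
      _ = π xm * (n * (1 - (1 - α) * B)) := by ring
  have hxU : x ∈ U := (hmemU x).2 hx
  have hπx : π x = c :=
    le_antisymm (le_trans (hmax x hxU) hMc) (le_trans hmc (hmin x hxU))
  rw [hπx, hc]
  have heq : N + α * B = 1 - (1 - α) * B := by linarith [hNB]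
  rw [heq]
end

section
/- Suppose β(x) = 1/|R| for all x ∈ R, and let π be a stationary distribution of M_R. Then for every x ∈ R: (1 − (1−α)·|F_x|/|R|)·π(x) = α/|R| + ((1−α)/|R|)·∑_{y∈R : xR ⊊ yR} |ann(y)|·π(y), where the sum is over all y ∈ R whose principal ideal strictly contains the principal ideal generated by x. -/
open Finset

open scoped Classical

lemma mem_annId {R : Type} [CommRing R] {a r : R} : r ∈ annId a ↔ r * a = 0 := Iff.rfl

lemma card_fiber {R : Type} [CommRing R] [Fintype R] (c a : R) (h : c ∣ a) :
    (Finset.univ.filter (fun r => c * r = a)).card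
      = (Finset.univ.filter (fun r : R => r * c = 0)).card := by
  obtain ⟨r0, hr0⟩ := h
  apply Finset.card_bij (fun r _ => r - r0)
  · intro r hr
    simp only [mem_filter, mem_univ, true_and] at hr ⊢
    rw [sub_mul, mul_comm r c, hr, mul_comm r0 c, ← hr0, sub_self]
  · intro r hr s hs hrs
    simpa using congrArg (· + r0) hrs
  · intro s hs
    simp only [mem_filter, mem_univ, true_and] at hs ⊢
    exact ⟨s + r0, by rw [mul_add, mul_comm c s, hs, zero_add, hr0], by ring⟩

lemma card_fiber_zero {R : Type} [CommRing R] [Fintype R] (c a : R) (h : ¬ c ∣ a) :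
    (Finset.univ.filter (fun r => c * r = a)).card = 0 := by
  rw [Finset.card_eq_zero, Finset.filter_eq_empty_iff]
  intro r _ hr
  exact h ⟨r, hr.symm⟩

lemma unit_iff {R : Type} [CommRing R] (x r : R) :
    IsUnit (Ideal.Quotient.mk (annId x) r) ↔ Ideal.span ({x} : Set R) = Ideal.span {r * x} := by
  constructor
  · intro h
    rcases isUnit_iff_exists_inv.mp h with ⟨s', hs⟩
    obtain ⟨s, rfl⟩ := Ideal.Quotient.mk_surjective s'
    rw [← map_mul, ← map_one (Ideal.Quotient.mk (annId x)), Ideal.Quotient.eq] at hs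
    have hx : x = s * (r * x) := by
      have := mem_annId.mp hs
      rw [sub_mul, one_mul, sub_eq_zero] at this
      linear_combination -this
    apply le_antisymm
    · rw [Ideal.span_singleton_le_span_singleton]
      exact ⟨s, by linear_combination hx⟩
    · rw [Ideal.span_singleton_le_span_singleton]
      exact ⟨r, mul_comm r x⟩
  · intro h
    have hx : x ∈ Ideal.span ({r * x} : Set R) := by
      rw [← h]; exact Ideal.subset_span rfl
    rw [Ideal.mem_span_singleton] at hx
    obtain ⟨s, hs⟩ := hx
    apply isUnit_iff_exists_inv.mpr
    refine ⟨Ideal.Quotient.mk (annId x) s, ?_⟩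
    rw [← map_mul, ← map_one (Ideal.Quotient.mk (annId x)), Ideal.Quotient.eq]
    rw [mem_annId, sub_mul, one_mul, sub_eq_zero]
    linear_combination -hs

lemma ann_filter_eq {R : Type} [CommRing R] [Fintype R] {a b : R}
    (h : Ideal.span ({a} : Set R) = Ideal.span {b}) :
    Finset.univ.filter (fun r : R => r * a = 0) = Finset.univ.filter (fun r : R => r * b = 0) := by
  ext r
  simp only [mem_filter, mem_univ, true_and]
  have hab : a ∣ b := by
    rw [← Ideal.span_singleton_le_span_singleton]; exact le_of_eq h.symm
  have hba : b ∣ a := by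
    rw [← Ideal.span_singleton_le_span_singleton]; exact le_of_eq h
  obtain ⟨t, ht⟩ := hab
  obtain ⟨u, hu⟩ := hba
  constructor
  · intro hr; rw [ht, ← mul_assoc, hr, zero_mul]
  · intro hr; rw [hu, ← mul_assoc, hr, zero_mul]

lemma stat' (R : Type) [CommRing R] [Fintype R]
    (α : ℝ) (β : R → ℝ) (hβ : ∀ x, β x = 1 / (Fintype.card R : ℝ))
    (π : R → ℝ) (hπsum : ∑ x, π x = 1)
    (hπstat : ∀ b : R, ∑ a : R, π a * Mmat R α β a b = π b) :
    ∀ b : R, π b = α / (Fintype.card R : ℝ) + (1 - α) / (Fintype.card R : ℝ) *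
      ∑ a : R, ((Finset.univ.filter (fun r => a * r = b)).card : ℝ) * π a := by
  intro b
  have hM : ∀ a : R, π a * Mmat R α β a b
      = π a * (α / (Fintype.card R : ℝ))
        + (1 - α) / (Fintype.card R : ℝ) *
          (((Finset.univ.filter (fun r => a * r = b)).card : ℝ) * π a) := by
    intro a
    unfold Mmat Bmat
    rw [Finset.sum_congr rfl (fun x _ => hβ x), Finset.sum_const, nsmul_eq_mul]
    ring
  have h := hπstat b
  rw [Finset.sum_congr rfl (fun a _ => hM a), Finset.sum_add_distrib, ← Finset.sum_mul,
    hπsum, one_mul, ← Finset.mul_sum] at h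
  linarith [h]

lemma pi_const (R : Type) [CommRing R] [Fintype R]
    (α : ℝ) (β : R → ℝ) (hβ : ∀ x, β x = 1 / (Fintype.card R : ℝ))
    (π : R → ℝ) (hπsum : ∑ x, π x = 1)
    (hπstat : ∀ b : R, ∑ a : R, π a * Mmat R α β a b = π b)
    (a b : R) (h : Ideal.span ({a} : Set R) = Ideal.span {b}) : π a = π b := by
  rw [stat' R α β hβ π hπsum hπstat a, stat' R α β hβ π hπsum hπstat b]
  congr 1
  congr 1
  apply Finset.sum_congr rfl
  intro c _
  congr 2
  by_cases hc : c ∣ a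
  · have hcb : c ∣ b := by
      rw [← Ideal.span_singleton_le_span_singleton] at hc ⊢
      rw [← h]; exact hc
    rw [card_fiber c a hc, card_fiber c b hcb]
  · have hcb : ¬ c ∣ b := by
      rw [← Ideal.span_singleton_le_span_singleton] at hc ⊢
      rw [← h]; exact hc
    rw [card_fiber_zero c a hc, card_fiber_zero c b hcb]

lemma card_Fx {R : Type} [CommRing R] [Fintype R] (x : R) :
    (Finset.univ.filter (fun r => IsUnit (Ideal.Quotient.mk (annId x) r))).card
      = (Finset.univ.filter (fun a : R => Ideal.span ({a} : Set R) = Ideal.span {x})).card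
        * (Finset.univ.filter (fun r : R => r * x = 0)).card := by
  rw [Finset.card_eq_sum_card_fiberwise
    (f := fun r : R => r * x)
    (t := Finset.univ.filter (fun a : R => Ideal.span ({a} : Set R) = Ideal.span {x}))
    (fun r hr => by
      simp only [Finset.mem_coe, mem_filter, mem_univ, true_and] at hr ⊢
      exact ((unit_iff x r).mp hr).symm)]
  rw [Finset.sum_congr rfl (fun a ha => ?_), Finset.sum_const, smul_eq_mul]
  simp only [mem_filter, mem_univ, true_and] at ha
  have hfe : (Finset.univ.filter (fun r => IsUnit (Ideal.Quotient.mk (annId x) r))).filter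
      (fun r => r * x = a) = Finset.univ.filter (fun r : R => x * r = a) := by
    ext r
    simp only [mem_filter, mem_univ, true_and]
    constructor
    · intro hr; rw [mul_comm]; exact hr.2
    · intro hr
      have hrx : r * x = a := by rw [mul_comm]; exact hr
      refine ⟨(unit_iff x r).mpr ?_, hrx⟩
      rw [hrx]; exact ha.symm
  rw [hfe, card_fiber x a (by
    rw [← Ideal.span_singleton_le_span_singleton]; exact le_of_eq ha)]

/-- The recursion for the stationary distribution when multiplication is also
uniform: `(1 − (1−α)·|F_x|/|R|)·π(x)
  = α/|R| + ((1−α)/|R|)·∑_{y : xR ⊊ yR} |ann(y)|·π(y)`. -/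
theorem stmt16 (R : Type) [CommRing R] [Fintype R]
    (α : ℝ) (hα0 : 0 < α) (hα1 : α < 1)
    (β : R → ℝ) (hβ : ∀ x, β x = 1 / (Fintype.card R : ℝ))
    (π : R → ℝ) (hπ0 : ∀ x, 0 ≤ π x) (hπsum : ∑ x, π x = 1)
    (hπstat : ∀ b : R, ∑ a : R, π a * Mmat R α β a b = π b) :
    ∀ x : R,
      (1 - (1 - α) *
          ((Finset.univ.filter
            (fun r => IsUnit (Ideal.Quotient.mk (annId x) r))).card : ℝ) /
          (Fintype.card R : ℝ)) * π x =
        α / (Fintype.card R : ℝ) +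
          ((1 - α) / (Fintype.card R : ℝ)) *
            ∑ y ∈ Finset.univ.filter
              (fun y => Ideal.span ({x} : Set R) < Ideal.span {y}),
              ((Finset.univ.filter (fun r => r * y = 0)).card : ℝ) * π y := by
  intro x
  have key := stat' R α β hβ π hπsum hπstat x
  rw [← Finset.sum_filter_add_sum_filter_not Finset.univ
    (fun a => Ideal.span ({x} : Set R) < Ideal.span {a})] at key
  have h1 : ∑ a ∈ Finset.univ.filter
        (fun a => Ideal.span ({x} : Set R) < Ideal.span {a}),
        ((Finset.univ.filter (fun r => a * r = x)).card : ℝ) * π a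
      = ∑ y ∈ Finset.univ.filter
        (fun y => Ideal.span ({x} : Set R) < Ideal.span {y}),
        ((Finset.univ.filter (fun r => r * y = 0)).card : ℝ) * π y := by
    apply Finset.sum_congr rfl
    intro a ha
    simp only [mem_filter, mem_univ, true_and] at ha
    have hdvd : a ∣ x := by
      rw [← Ideal.span_singleton_le_span_singleton]
      exact le_of_lt ha
    rw [card_fiber a x hdvd]
  have h2 : ∑ a ∈ Finset.univ.filter
        (fun a => ¬ Ideal.span ({x} : Set R) < Ideal.span {a}),
        ((Finset.univ.filter (fun r => a * r = x)).card : ℝ) * π a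
      = ((Finset.univ.filter
          (fun r => IsUnit (Ideal.Quotient.mk (annId x) r))).card : ℝ) * π x := by
    have step1 : ∀ a ∈ Finset.univ.filter
        (fun a => ¬ Ideal.span ({x} : Set R) < Ideal.span {a}),
        ((Finset.univ.filter (fun r => a * r = x)).card : ℝ) * π a
          = if Ideal.span ({a} : Set R) = Ideal.span {x} then
              ((Finset.univ.filter (fun r : R => r * x = 0)).card : ℝ) * π x else 0 := by
      intro a ha
      simp only [mem_filter, mem_univ, true_and] at ha
      by_cases hq : Ideal.span ({a} : Set R) = Ideal.span {x}
      · rw [if_pos hq]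
        have hdvd : a ∣ x := by
          rw [← Ideal.span_singleton_le_span_singleton]
          exact le_of_eq hq.symm
        rw [card_fiber a x hdvd, pi_const R α β hβ π hπsum hπstat a x hq, ann_filter_eq hq]
      · rw [if_neg hq]
        have hnd : ¬ a ∣ x := by
          intro hd
          rw [← Ideal.span_singleton_le_span_singleton] at hd
          rcases lt_or_eq_of_le hd with h | h
          · exact ha h
          · exact hq h.symm
        rw [card_fiber_zero a x hnd, Nat.cast_zero, zero_mul]
    rw [Finset.sum_congr rfl step1, ← Finset.sum_filter, Finset.filter_filter,
      Finset.sum_const, nsmul_eq_mul]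
    have hfe : Finset.univ.filter (fun a : R =>
        ¬ Ideal.span ({x} : Set R) < Ideal.span {a} ∧
          Ideal.span ({a} : Set R) = Ideal.span {x})
        = Finset.univ.filter (fun a : R => Ideal.span ({a} : Set R) = Ideal.span {x}) := by
      ext a
      simp only [mem_filter, mem_univ, true_and]
      constructor
      · exact fun h => h.2
      · intro h
        refine ⟨?_, h⟩
        rw [h]
        exact lt_irrefl _
    rw [hfe, card_Fx x, Nat.cast_mul]
    ring
  rw [h1, h2] at key
  linear_combination key
end

section
/- Let R be a finite chain ring with maximal ideal m, residue field cardinality q = |R/m|, and k the least positive integer with m^k = 0. Suppose β(x) = 1/|R| for all x ∈ R, and let π be a stationary distribution of M_R. Then π(0) = 1/(1+(q−1)α)^k, and for every i with 0 ≤ i < k and every x ∈ m^i with x ∉ m^{i+1}, π(x) = α / ( q^{k−i−1}·(1+(q−1)α)^{i+1} ). -/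
open Finset

open scoped Classical

section Aux
variable {R : Type} [CommRing R] [Fintype R]

/-- translation of fibers -/
lemma fiber_card_eq (a b y : R) (hy : a * y = b) :
    (univ.filter (fun x => a * x = b)).card = (univ.filter (fun x => a * x = 0)).card := by
  symm
  apply Finset.card_bij (fun x _ => x + y)
  · intro x hx
    simp only [mem_filter, mem_univ, true_and] at *
    rw [mul_add, hx, hy, zero_add]
  · intro x1 h1 x2 h2 h; simpa using h
  · intro z hz
    simp only [mem_filter, mem_univ, true_and] at *
    exact ⟨z - y, by rw [mul_sub, hz, hy, sub_self], by ring⟩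

lemma count_preimage (t' : R) (P : R → Prop) (hP : ∀ b, P b → t' ∣ b) :
    (univ.filter (fun x => P (t' * x))).card
      = (univ.filter P).card * (univ.filter (fun x => t' * x = 0)).card := by
  rw [Finset.card_eq_sum_card_fiberwise
    (f := fun x => t' * x) (t := univ.filter P)
    (fun x hx => by simp only [Finset.mem_coe, mem_filter, mem_univ, true_and] at *; exact hx)]
  rw [Finset.sum_congr rfl (g := fun _ => (univ.filter (fun x => t' * x = 0)).card) ?_]
  · rw [Finset.sum_const, smul_eq_mul]
  · intro b hb
    simp only [mem_filter, mem_univ, true_and] at hb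
    obtain ⟨c, hc⟩ := hP b hb
    have : (univ.filter fun x => P (t' * x)).filter (fun x => t' * x = b)
        = univ.filter (fun x => t' * x = b) := by
      ext x
      simp only [mem_filter, mem_univ, true_and, and_iff_right_iff_imp]
      intro h; rw [h]; exact hb
    rw [this, fiber_card_eq t' b c hc.symm]

end Aux

section Aux2
variable {R : Type} [CommRing R] [Fintype R]

lemma card_quotient_mul (I : Ideal R) :
    Fintype.card R = Nat.card (R ⧸ I) * (univ.filter (fun x => x ∈ I)).card := by
  haveI : Fintype (R ⧸ I) := Fintype.ofFinite _
  rw [Nat.card_eq_fintype_card]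
  rw [← Finset.card_univ (α := R)]
  rw [Finset.card_eq_sum_card_fiberwise
    (f := fun x => (Ideal.Quotient.mk I x : R ⧸ I)) (t := univ) (fun x _ => mem_univ _)]
  rw [Finset.sum_congr rfl (g := fun _ => (univ.filter (fun x => x ∈ I)).card) ?_]
  · rw [Finset.sum_const, smul_eq_mul, Finset.card_univ]
  · intro c _
    obtain ⟨y, rfl⟩ := Ideal.Quotient.mk_surjective c
    symm
    apply Finset.card_bij (fun x _ => x + y)
    · intro x hx
      simp only [mem_filter, mem_univ, true_and] at *
      rw [map_add, Ideal.Quotient.eq_zero_iff_mem.mpr hx, zero_add]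
    · intro x1 h1 x2 h2 h; simpa using h
    · intro z hz
      simp only [mem_filter, mem_univ, true_and] at *
      refine ⟨z - y, ?_, by ring⟩
      rw [← Ideal.Quotient.eq_zero_iff_mem, map_sub, hz, sub_self]

end Aux2

section Aux3
variable {R : Type} [CommRing R] [IsLocalRing R]

open IsLocalRing

lemma chain_pow_ne (k : ℕ) (hk : maximalIdeal R ^ k = ⊥)
    (hkmin : ∀ j : ℕ, 0 < j → maximalIdeal R ^ j = ⊥ → k ≤ j)
    {i : ℕ} (hi : i < k) : maximalIdeal R ^ i ≠ maximalIdeal R ^ (i + 1) := by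
  intro h
  have key : ∀ j : ℕ, maximalIdeal R ^ (i + j) = maximalIdeal R ^ i := by
    intro j
    induction j with
    | zero => rfl
    | succ j ih => rw [← add_assoc, pow_succ, ih, ← pow_succ, ← h]
  have hbot : maximalIdeal R ^ i = ⊥ := by
    have := key (k - i)
    rw [Nat.add_sub_cancel' hi.le] at this
    rw [← this, hk]
  rcases Nat.eq_zero_or_pos i with h0 | h0
  · rw [h0, pow_zero, Ideal.one_eq_top] at hbot
    have h1 : (1 : R) ∈ (⊥ : Ideal R) := hbot ▸ Submodule.mem_top
    simp at h1
  · exact absurd (hkmin i h0 hbot) (by omega)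

lemma t_pow_notmem {t : R} (ht : maximalIdeal R = Ideal.span {t})
    (k : ℕ) (hk : maximalIdeal R ^ k = ⊥)
    (hkmin : ∀ j : ℕ, 0 < j → maximalIdeal R ^ j = ⊥ → k ≤ j)
    {i : ℕ} (hi : i < k) : t ^ i ∉ maximalIdeal R ^ (i + 1) := by
  intro hmem
  apply chain_pow_ne k hk hkmin hi
  apply le_antisymm _ (Ideal.pow_le_pow_right (by omega))
  rw [ht, Ideal.span_singleton_pow, Ideal.span_singleton_le_iff_mem, ← ht]
  exact hmem

lemma mem_pow_iff_dvd {t : R} (ht : maximalIdeal R = Ideal.span {t}) (i : ℕ) (b : R) :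
    b ∈ maximalIdeal R ^ i ↔ t ^ i ∣ b := by
  rw [ht, Ideal.span_singleton_pow, Ideal.mem_span_singleton]

/-- unit decomposition for elements of exact level `i` -/
lemma unit_decomp {t : R} (ht : maximalIdeal R = Ideal.span {t})
    {i : ℕ} {a : R} (hmem : a ∈ maximalIdeal R ^ i) (hnot : a ∉ maximalIdeal R ^ (i + 1)) :
    ∃ u : R, IsUnit u ∧ a = t ^ i * u := by
  obtain ⟨c, hc⟩ := (mem_pow_iff_dvd ht i a).mp hmem
  refine ⟨c, ?_, hc⟩
  by_contra hcu
  apply hnot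
  rw [hc, pow_succ]
  exact Ideal.mul_mem_mul (Ideal.pow_mem_pow ((ht ▸ Ideal.mem_span_singleton_self t)) i)
    ((IsLocalRing.mem_maximalIdeal c).mpr hcu)

end Aux3

section Aux4
variable {R : Type} [CommRing R] [Fintype R] [IsLocalRing R]
open IsLocalRing

lemma card_pow_eq {t : R} (ht : maximalIdeal R = Ideal.span {t})
    (q k : ℕ) (hq : q = Nat.card (R ⧸ maximalIdeal R))
    (hk : maximalIdeal R ^ k = ⊥)
    (hkmin : ∀ j : ℕ, 0 < j → maximalIdeal R ^ j = ⊥ → k ≤ j) :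
    ∀ i ≤ k, (univ.filter (fun x : R => x ∈ maximalIdeal R ^ i)).card = q ^ (k - i) := by
  set C : ℕ → ℕ := fun i => (univ.filter (fun x : R => x ∈ maximalIdeal R ^ i)).card with hC
  set A : ℕ → ℕ := fun i => (univ.filter (fun x : R => t ^ i * x = 0)).card with hA
  have hn : 0 < Fintype.card R := Fintype.card_pos
  have hCA : ∀ i, C i * A i = Fintype.card R := by
    intro i
    have := count_preimage (t ^ i) (fun b => b ∈ maximalIdeal R ^ i)
      (fun b hb => (mem_pow_iff_dvd ht i b).mp hb)
    rw [show (univ.filter fun x : R => t ^ i * x ∈ maximalIdeal R ^ i) = univ from ?_,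
      Finset.card_univ] at this
    · exact this.symm
    · ext x
      simp only [mem_filter, mem_univ, true_and, iff_true]
      exact (mem_pow_iff_dvd ht i _).mpr ⟨x, rfl⟩
  have hC1A : ∀ i < k, C 1 = C (i + 1) * A i := by
    intro i hi
    have := count_preimage (t ^ i) (fun b => b ∈ maximalIdeal R ^ (i + 1))
      (fun b hb => (mem_pow_iff_dvd ht i b).mp (Ideal.pow_le_pow_right (by omega) hb))
    rw [show (univ.filter fun x : R => t ^ i * x ∈ maximalIdeal R ^ (i + 1))
        = univ.filter (fun x : R => x ∈ maximalIdeal R ^ 1) from ?_] at this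
    · exact this
    · ext x
      simp only [mem_filter, mem_univ, true_and, pow_one]
      constructor
      · intro h
        by_contra hx
        have hu : IsUnit x := IsLocalRing.notMem_maximalIdeal.mp hx
        obtain ⟨v, hv⟩ := hu.exists_right_inv
        have : t ^ i ∈ maximalIdeal R ^ (i + 1) := by
          have := Ideal.mul_mem_right v _ h
          rwa [mul_assoc, hv, mul_one] at this
        exact t_pow_notmem ht k hk hkmin hi this
      · intro h
        rw [pow_succ]
        exact Ideal.mul_mem_mul
          (Ideal.pow_mem_pow (ht ▸ Ideal.mem_span_singleton_self t) i) h
  have hqC1 : Fintype.card R = q * C 1 := by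
    rw [hq]
    have := card_quotient_mul (IsLocalRing.maximalIdeal R)
    rw [this]
    congr 1
    simp only [hC, pow_one]
  have hC1pos : 0 < C 1 := by
    rcases Nat.eq_zero_or_pos (C 1) with h | h
    · rw [h, mul_zero] at hqC1; omega
    · exact h
  have hstep : ∀ i < k, C i = q * C (i + 1) := by
    intro i hi
    have h1 : C 1 * C i = C (i + 1) * (C i * A i) := by rw [hC1A i hi]; ring
    rw [hCA i, hqC1] at h1
    exact Nat.eq_of_mul_eq_mul_left hC1pos (by rw [h1]; ring)
  have hCk : C k = 1 := by
    have : (univ.filter (fun x : R => x ∈ maximalIdeal R ^ k)) = {0} := by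
      ext x
      simp [hk, Ideal.mem_bot]
    simp only [hC, this, Finset.card_singleton]
  have main : ∀ j ≤ k, C (k - j) = q ^ j := by
    intro j
    induction j with
    | zero => intro _; simpa using hCk
    | succ j ih =>
      intro hjk
      have h1 : k - (j + 1) < k := by omega
      have h2 : k - (j + 1) + 1 = k - j := by omega
      rw [hstep _ h1, h2, ih (by omega), pow_succ, mul_comm]
  intro i hi
  have := main (k - i) (by omega)
  rwa [show k - (k - i) = i from by omega] at this

end Aux4

section Aux5
variable {R : Type} [CommRing R] [IsLocalRing R]
open IsLocalRing

/-- the level (valuation) of an element, truncated at `k`; `lvl k 0 = k`. -/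
noncomputable def lvl (k : ℕ) (a : R) : ℕ :=
  Nat.findGreatest (fun i => a ∈ maximalIdeal R ^ i) k

lemma lvl_le (k : ℕ) (a : R) : lvl k a ≤ k := Nat.findGreatest_le k

lemma mem_lvl (k : ℕ) (a : R) : a ∈ maximalIdeal R ^ lvl k a := by
  have := Nat.findGreatest_spec (P := fun i => a ∈ maximalIdeal R ^ i) (Nat.zero_le k)
    (by show a ∈ maximalIdeal R ^ 0; rw [pow_zero, Ideal.one_eq_top]; exact Submodule.mem_top)
  exact this

lemma le_lvl_iff (k : ℕ) (a : R) {i : ℕ} (hik : i ≤ k) :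
    i ≤ lvl k a ↔ a ∈ maximalIdeal R ^ i := by
  constructor
  · intro h
    exact Ideal.pow_le_pow_right h (mem_lvl k a)
  · intro h
    exact Nat.le_findGreatest hik h

lemma lvl_notmem {k : ℕ} {a : R} (h : lvl k a < k) :
    a ∉ maximalIdeal R ^ (lvl k a + 1) := by
  have := Nat.findGreatest_is_greatest (P := fun i => a ∈ maximalIdeal R ^ i) (n := k)
    (k := lvl k a + 1) (lt_add_one _) (by omega)
  exact this

lemma lvl_eq_iff {k : ℕ} {a : R} {i : ℕ} (hi : i < k) :
    lvl k a = i ↔ (a ∈ maximalIdeal R ^ i ∧ a ∉ maximalIdeal R ^ (i + 1)) := by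
  constructor
  · intro h
    exact ⟨h ▸ mem_lvl k a, h ▸ lvl_notmem (h ▸ hi)⟩
  · rintro ⟨h1, h2⟩
    have hle : i ≤ lvl k a := (le_lvl_iff k a hi.le).mpr h1
    rcases eq_or_lt_of_le hle with h | h
    · omega
    · exact absurd ((le_lvl_iff k a (by omega)).mp h) h2

lemma lvl_zero (k : ℕ) : lvl k (0 : R) = k :=
  le_antisymm (lvl_le k 0) (Nat.le_findGreatest le_rfl (zero_mem _))

lemma lvl_eq_k {k : ℕ} (hk : maximalIdeal R ^ k = ⊥) {a : R} :
    lvl k a = k ↔ a = 0 := by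
  constructor
  · intro h
    have := mem_lvl k a
    rw [h, hk, Ideal.mem_bot] at this
    exact this
  · rintro rfl; exact lvl_zero k

end Aux5


open IsLocalRing in
/-- The stationary distribution of `(X̃ₙ)` on a finite chain ring:
`π(0) = 1/(1+(q−1)α)^k` and `π(x) = α/(q^{k−i−1}(1+(q−1)α)^{i+1})` for
`x ∈ m^i \ m^{i+1}`, `0 ≤ i < k`. -/
theorem stmt17 (R : Type) [CommRing R] [Fintype R] [IsLocalRing R]
    [IsPrincipalIdealRing R]
    (q : ℕ) (hq : q = Nat.card (R ⧸ IsLocalRing.maximalIdeal R))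
    (k : ℕ) (hk0 : 0 < k) (hk : IsLocalRing.maximalIdeal R ^ k = ⊥)
    (hkmin : ∀ j : ℕ, 0 < j → IsLocalRing.maximalIdeal R ^ j = ⊥ → k ≤ j)
    (α : ℝ) (hα0 : 0 < α) (hα1 : α < 1)
    (β : R → ℝ) (hβ : ∀ x, β x = 1 / (Fintype.card R : ℝ))
    (π : R → ℝ) (hπ0 : ∀ x, 0 ≤ π x) (hπsum : ∑ x, π x = 1)
    (hπstat : ∀ b : R, ∑ a : R, π a * Mmat R α β a b = π b) :
    π 0 = 1 / (1 + ((q : ℝ) - 1) * α) ^ k ∧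
    ∀ i : ℕ, i < k → ∀ x : R,
      x ∈ IsLocalRing.maximalIdeal R ^ i →
      x ∉ IsLocalRing.maximalIdeal R ^ (i + 1) →
      π x = α / ((q : ℝ) ^ (k - i - 1) * (1 + ((q : ℝ) - 1) * α) ^ (i + 1)) := by
  classical
  obtain ⟨t, ht⟩ := (IsPrincipalIdealRing.principal (maximalIdeal R)).principal
  rw [Ideal.submodule_span_eq] at ht
  have hcard : ∀ i ≤ k,
      (univ.filter (fun x : R => x ∈ maximalIdeal R ^ i)).card = q ^ (k - i) :=
    card_pow_eq ht q k hq hk hkmin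
  have hn : Fintype.card R = q ^ k := by
    have h0 := hcard 0 (Nat.zero_le k)
    rw [Nat.sub_zero] at h0
    rw [← h0, ← Finset.card_univ]
    congr 1
    ext x
    simp [pow_zero, Ideal.one_eq_top]
  have hq0 : 0 < q := by
    rcases Nat.eq_zero_or_pos q with h | h
    · exfalso
      have hpos := Fintype.card_pos (α := R)
      rw [hn, h, Nat.zero_pow hk0] at hpos
      omega
    · exact h
  have hqR : (1 : ℝ) ≤ (q : ℝ) := by exact_mod_cast hq0
  have hqR0 : (0 : ℝ) < (q : ℝ) := by linarith
  have hnR : ((Fintype.card R : ℕ) : ℝ) = (q : ℝ) ^ k := by rw [hn]; push_cast; ring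
  have hnne : ((Fintype.card R : ℕ) : ℝ) ≠ 0 := by
    rw [hnR]; positivity
  have hDpos : (0 : ℝ) < 1 + ((q : ℝ) - 1) * α := by nlinarith
  -- annihilator sets
  have htk : t ^ k = 0 := by
    have h1 : t ^ k ∈ maximalIdeal R ^ k := (mem_pow_iff_dvd ht k _).mpr dvd_rfl
    rw [hk] at h1
    exact (Ideal.mem_bot).mp h1
  have hannset : ∀ i ≤ k, (univ.filter (fun x : R => t ^ i * x = 0))
      = (univ.filter (fun x : R => x ∈ maximalIdeal R ^ (k - i))) := by
    intro i hik
    ext x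
    simp only [mem_filter, mem_univ, true_and]
    constructor
    · intro h0
      by_contra hx
      have hjlt : lvl k x < k - i := by
        by_contra hc
        exact hx ((le_lvl_iff k x (by omega)).mp (by omega))
      obtain ⟨w, hw, hxw⟩ := unit_decomp ht (mem_lvl k x)
        (lvl_notmem (show lvl k x < k by omega))
      obtain ⟨v, hv⟩ := hw.exists_right_inv
      have htij : t ^ (i + lvl k x) = 0 := by
        have h2 : t ^ (i + lvl k x) = t ^ i * x * v := by
          linear_combination (-(t ^ i * v)) * hxw + (-(t ^ i * t ^ (lvl k x))) * hv
        rw [h2, h0, zero_mul]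
      have h3 : t ^ (i + lvl k x) ∈ maximalIdeal R ^ (i + lvl k x + 1) := by
        rw [htij]; exact zero_mem _
      exact t_pow_notmem ht k hk hkmin (show i + lvl k x < k by omega) h3
    · intro hx
      obtain ⟨c, hc⟩ := (mem_pow_iff_dvd ht (k - i) x).mp hx
      rw [hc, ← mul_assoc, ← pow_add, show i + (k - i) = k from by omega, htk, zero_mul]
  -- value of the fiber count
  have hNval : ∀ a b : R, ((univ.filter (fun x : R => a * x = b)).card : ℝ)
      = if b ∈ maximalIdeal R ^ (lvl k a) then (q : ℝ) ^ (lvl k a) else 0 := by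
    intro a b
    by_cases hb : b ∈ maximalIdeal R ^ (lvl k a)
    · rw [if_pos hb]
      have hdec : ∃ u : R, IsUnit u ∧ a = t ^ (lvl k a) * u := by
        rcases lt_or_eq_of_le (lvl_le k a) with h | h
        · exact unit_decomp ht (mem_lvl k a) (lvl_notmem h)
        · refine ⟨1, isUnit_one, ?_⟩
          rw [h, htk, zero_mul, ((lvl_eq_k hk).mp h : a = 0)]
      obtain ⟨u, hu, ha⟩ := hdec
      obtain ⟨v, hv⟩ := hu.exists_right_inv
      obtain ⟨c, hcb⟩ := (mem_pow_iff_dvd ht (lvl k a) b).mp hb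
      have hy : a * (v * c) = b := by
        linear_combination (v * c) * ha - hcb + (t ^ lvl k a * c) * hv
      rw [fiber_card_eq a b _ hy]
      have hfe : (univ.filter fun x : R => a * x = 0)
          = (univ.filter fun x : R => t ^ (lvl k a) * x = 0) := by
        ext x
        simp only [mem_filter, mem_univ, true_and]
        constructor
        · intro h
          have h2 : t ^ (lvl k a) * x = a * x * v := by
            linear_combination (-(x * v)) * ha + (-(t ^ lvl k a * x)) * hv
          rw [h2, h, zero_mul]
        · intro h
          have h2 : a * x = u * (t ^ lvl k a * x) := by
            linear_combination x * ha
          rw [h2, h, mul_zero]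
      rw [hfe, hannset (lvl k a) (lvl_le k a),
        hcard (k - lvl k a) (by omega),
        show k - (k - lvl k a) = lvl k a from by
          have := lvl_le k a; omega]
      push_cast; ring
    · rw [if_neg hb]
      have hfe : (univ.filter fun x : R => a * x = b) = ∅ := by
        rw [Finset.filter_eq_empty_iff]
        intro x _ h
        exact hb (h ▸ Ideal.mul_mem_right x _ (mem_lvl k a))
      rw [hfe]
      simp
  -- the functions G, p, S
  set G : ℕ → ℝ := fun j =>
    ∑ a : R, π a * (if lvl k a ≤ j then (q : ℝ) ^ (lvl k a) else 0) with hG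
  set p : ℕ → ℝ := fun j =>
    α / ((Fintype.card R : ℕ) : ℝ) + (1 - α) / ((Fintype.card R : ℕ) : ℝ) * G j with hp
  set S : ℕ → ℝ := fun i => ∑ a ∈ univ.filter (fun a : R => lvl k a = i), π a with hS
  -- π b = p (lvl k b)
  have hπp : ∀ b : R, π b = p (lvl k b) := by
    intro b
    rw [← hπstat b]
    have hMval : ∀ a : R, Mmat R α β a b
        = α / ((Fintype.card R : ℕ) : ℝ) + (1 - α) / ((Fintype.card R : ℕ) : ℝ)
          * ((univ.filter (fun x : R => a * x = b)).card : ℝ) := by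
      intro a
      show α / (Fintype.card R : ℝ) + (1 - α) * Bmat R β a b = _
      have : Bmat R β a b = ((univ.filter (fun x : R => a * x = b)).card : ℝ)
          * (1 / (Fintype.card R : ℝ)) := by
        show (∑ x ∈ univ.filter (fun x => a * x = b), β x) = _
        rw [Finset.sum_congr rfl (fun x _ => hβ x), Finset.sum_const, nsmul_eq_mul]
      rw [this]; ring
    calc ∑ a : R, π a * Mmat R α β a b
        = ∑ a : R, (π a * (α / ((Fintype.card R : ℕ) : ℝ))
            + (1 - α) / ((Fintype.card R : ℕ) : ℝ)
              * (π a * (if lvl k a ≤ lvl k b then (q : ℝ) ^ (lvl k a) else 0))) := by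
          apply Finset.sum_congr rfl
          intro a _
          rw [hMval a, hNval a b,
            if_congr ((le_lvl_iff k b (lvl_le k a)).symm) rfl rfl]
          ring
      _ = (∑ a : R, π a) * (α / ((Fintype.card R : ℕ) : ℝ))
            + (1 - α) / ((Fintype.card R : ℕ) : ℝ) * G (lvl k b) := by
          rw [Finset.sum_add_distrib, ← Finset.sum_mul, hG, ← Finset.mul_sum]
      _ = p (lvl k b) := by rw [hπsum, hp, one_mul]
  -- G recursions
  have hGstep : ∀ j : ℕ, G (j + 1) = G j + (q : ℝ) ^ (j + 1) * S (j + 1) := by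
    intro j
    have hpt : ∀ a : R, π a * (if lvl k a ≤ j + 1 then (q : ℝ) ^ (lvl k a) else 0)
        = π a * (if lvl k a ≤ j then (q : ℝ) ^ (lvl k a) else 0)
          + (if lvl k a = j + 1 then π a * (q : ℝ) ^ (j + 1) else 0) := by
      intro a
      by_cases h1 : lvl k a ≤ j
      · rw [if_pos (by omega), if_pos h1, if_neg (by omega)]; ring
      · by_cases h2 : lvl k a = j + 1
        · rw [if_pos (by omega), if_neg h1, if_pos h2, h2]; ring
        · rw [if_neg (by omega), if_neg h1, if_neg h2]; ring
    simp only [hG, hS]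
    rw [Finset.sum_congr rfl (fun a _ => hpt a), Finset.sum_add_distrib,
      ← Finset.sum_filter, ← Finset.sum_mul]
    congr 1
    rw [mul_comm]
  have hG0 : G 0 = S 0 := by
    simp only [hG, hS]
    rw [Finset.sum_congr rfl (g := fun a => if lvl k a = 0 then π a else 0) ?_,
      ← Finset.sum_filter]
    intro a _
    by_cases h : lvl k a = 0
    · simp [h]
    · simp [h, Nat.le_zero]
  -- S values
  have hSval : ∀ i, i < k → S i = ((q : ℝ) ^ (k - i) - (q : ℝ) ^ (k - i - 1)) * p i := by
    intro i hik
    have hsum : S i = ((univ.filter (fun a : R => lvl k a = i)).card : ℝ) * p i := by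
      rw [hS]
      show (∑ a ∈ univ.filter (fun a : R => lvl k a = i), π a) = _
      rw [Finset.sum_congr rfl (g := fun _ => p i) ?_, Finset.sum_const, nsmul_eq_mul]
      intro a ha
      rw [hπp a, (Finset.mem_filter.mp ha).2]
    have hcardL : (univ.filter (fun a : R => a ∈ maximalIdeal R ^ i)).card
        = (univ.filter (fun a : R => lvl k a = i)).card
          + (univ.filter (fun a : R => a ∈ maximalIdeal R ^ (i + 1))).card := by
      rw [← Finset.card_union_of_disjoint ?_]
      · congr 1
        ext a
        simp only [Finset.mem_union, mem_filter, mem_univ, true_and]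
        constructor
        · intro hmem
          by_cases h2 : a ∈ maximalIdeal R ^ (i + 1)
          · exact Or.inr h2
          · exact Or.inl ((lvl_eq_iff hik).mpr ⟨hmem, h2⟩)
        · rintro (h | h)
          · exact ((lvl_eq_iff hik).mp h).1
          · exact Ideal.pow_le_pow_right (by omega) h
      · rw [Finset.disjoint_filter]
        intro a _ hla
        exact ((lvl_eq_iff hik).mp hla).2
    have hc1 := hcard i (by omega)
    have hc2 := hcard (i + 1) (by omega)
    rw [hc1, hc2] at hcardL
    have hcast : ((univ.filter (fun a : R => lvl k a = i)).card : ℝ)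
        = (q : ℝ) ^ (k - i) - (q : ℝ) ^ (k - i - 1) := by
      have hkk : k - (i + 1) = k - i - 1 := by omega
      rw [hkk] at hcardL
      have hcc := congrArg (Nat.cast (R := ℝ)) hcardL
      push_cast at hcc
      linarith
    rw [hsum, hcast]
  have hSk : S k = p k := by
    rw [hS]
    show (∑ a ∈ univ.filter (fun a : R => lvl k a = k), π a) = _
    have : (univ.filter (fun a : R => lvl k a = k)) = {0} := by
      ext a
      simp only [mem_filter, mem_univ, true_and, Finset.mem_singleton]
      exact lvl_eq_k hk
    rw [this, Finset.sum_singleton, hπp 0, lvl_zero]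
  -- multiplied-out p equations
  have hpN : ∀ j, p j * (q : ℝ) ^ k = α + (1 - α) * G j := by
    intro j
    rw [hp]
    show (α / ((Fintype.card R : ℕ) : ℝ) + (1 - α) / ((Fintype.card R : ℕ) : ℝ) * G j)
        * (q : ℝ) ^ k = _
    rw [← hnR]
    field_simp
  have hE0 : p 0 * (q : ℝ) ^ k
      = α + (1 - α) * (((q : ℝ) ^ k - (q : ℝ) ^ (k - 1)) * p 0) := by
    rw [hpN 0, hG0, hSval 0 hk0, Nat.sub_zero]
  have hEstep : ∀ j, j + 1 < k → p (j + 1) * (q : ℝ) ^ k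
      = p j * (q : ℝ) ^ k + (1 - α) * ((q : ℝ) ^ (j + 1)
        * (((q : ℝ) ^ (k - (j + 1)) - (q : ℝ) ^ (k - (j + 1) - 1)) * p (j + 1))) := by
    intro j hj
    have h1 := hGstep j
    rw [hSval (j + 1) hj] at h1
    rw [hpN (j + 1), h1, hpN j]
    ring
  have hEk : p k * (q : ℝ) ^ k
      = p (k - 1) * (q : ℝ) ^ k + (1 - α) * ((q : ℝ) ^ k * p k) := by
    have h1 := hGstep (k - 1)
    rw [show k - 1 + 1 = k from by omega, hSk] at h1
    rw [hpN k, h1, hpN (k - 1)]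
    ring
  -- solve the recursion
  have hform : ∀ i, i < k →
      p i = α / ((q : ℝ) ^ (k - 1 - i) * (1 + ((q : ℝ) - 1) * α) ^ (i + 1)) := by
    intro i
    induction i with
    | zero =>
      intro _
      obtain ⟨e, hke⟩ : ∃ e, k = e + 1 := ⟨k - 1, by omega⟩
      rw [show k - 1 - 0 = e from by omega, pow_one,
        eq_div_iff (by positivity)]
      rw [show k - 1 = e from by omega, hke] at hE0
      linear_combination hE0
    | succ i ih =>
      intro hik
      have hie := ih (by omega)
      obtain ⟨e, hke⟩ : ∃ e, k = i + 2 + e := ⟨k - i - 2, by omega⟩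
      have h1 := hEstep i hik
      rw [show k - (i + 1) - 1 = e from by omega,
        show k - (i + 1) = e + 1 from by omega,
        show (q : ℝ) ^ k = (q : ℝ) ^ (i + 1) * (q : ℝ) ^ (e + 1) from by
          rw [hke, ← pow_add]; ring_nf] at h1
      have h2 : (q : ℝ) ^ (i + 1) * (p (i + 1) * ((q : ℝ) ^ e
            * (1 + ((q : ℝ) - 1) * α)))
          = (q : ℝ) ^ (i + 1) * (p i * ((q : ℝ) ^ e * (q : ℝ))) := by
        linear_combination h1
      have h3 := mul_left_cancel₀ (pow_ne_zero (i + 1) (ne_of_gt hqR0)) h2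
      rw [show k - 1 - i = e + 1 from by omega, eq_div_iff (by positivity)] at hie
      rw [show k - 1 - (i + 1) = e from by omega, eq_div_iff (by positivity)]
      linear_combination (1 + ((q : ℝ) - 1) * α) ^ (i + 1) * h3 + hie
  have hpk : p k = 1 / (1 + ((q : ℝ) - 1) * α) ^ k := by
    have h2 : (q : ℝ) ^ k * (α * p k) = (q : ℝ) ^ k * p (k - 1) := by
      linear_combination hEk
    have h3 := mul_left_cancel₀ (pow_ne_zero k (ne_of_gt hqR0)) h2
    have h4 := hform (k - 1) (by omega)
    rw [show k - 1 - (k - 1) = 0 from by omega, pow_zero, one_mul,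
      show k - 1 + 1 = k from by omega, eq_div_iff (by positivity)] at h4
    rw [eq_div_iff (by positivity)]
    have h5 : α * (p k * (1 + ((q : ℝ) - 1) * α) ^ k) = α * 1 := by
      rw [mul_one]
      linear_combination (1 + ((q : ℝ) - 1) * α) ^ k * h3 + h4
    exact mul_left_cancel₀ (ne_of_gt hα0) h5
  constructor
  · rw [hπp 0, lvl_zero, hpk]
  · intro i hik x hx1 hx2
    rw [hπp x, (lvl_eq_iff hik).mpr ⟨hx1, hx2⟩, hform i hik,
      show k - 1 - i = k - i - 1 from by omega]
end

section
/- Let p be a prime, k ≥ 1, R = ℤ/p^kℤ, and suppose β(x) = 1/p^k for all x ∈ R. Define σ : R → ℝ by σ(0) = −(p−1), σ(t) = 1 if t ≠ 0 and t is a multiple of p^{k−1} in R, and σ(t) = 0 otherwise. Then σ, viewed as a row vector, is a left eigenvector of the transition matrix M_R with eigenvalue (1−α)(p−1)/p; that is, for every b ∈ R, ∑_{a∈R} σ(a)·M_R(a,b) = ((1−α)(p−1)/p)·σ(b). -/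
open Finset

open scoped Classical

/-- The number of multiples of `d` in `ZMod m` is `m / d`, when `d ∣ m`. -/
lemma card_multiples (m d : ℕ) [NeZero m] (hd : d ∣ m) :
    (Finset.univ.filter (fun x : ZMod m => ∃ y, x = (d : ZMod m) * y)).card = m / d := by
  have hm : m ≠ 0 := NeZero.ne m
  have hd0 : d ≠ 0 := by rintro rfl; exact hm (Nat.zero_dvd.mp hd)
  have hq : 0 < m / d := Nat.div_pos (Nat.le_of_dvd (Nat.pos_of_ne_zero hm) hd)
    (Nat.pos_of_ne_zero hd0)
  have hdm : d * (m / d) = m := Nat.mul_div_cancel' hd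
  apply Finset.card_eq_of_bijective (fun i _ => (d : ZMod m) * ((i : ℕ) : ZMod m))
  · intro a ha
    simp only [Finset.mem_filter, Finset.mem_univ, true_and] at ha
    obtain ⟨y, rfl⟩ := ha
    refine ⟨y.val % (m / d), Nat.mod_lt _ hq, ?_⟩
    have h1 : (y.val % (m / d)) ≡ y.val [MOD m / d] := Nat.mod_modEq _ _
    have h2 : d * (y.val % (m / d)) ≡ d * y.val [MOD m] := by
      have := h1.mul_left' d
      rwa [hdm] at this
    have h3 := (ZMod.natCast_eq_natCast_iff _ _ _).mpr h2
    push_cast at h3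
    rwa [ZMod.natCast_zmod_val] at h3
  · intro i _
    simp only [Finset.mem_filter, Finset.mem_univ, true_and]
    exact ⟨_, rfl⟩
  · intro i j hi hj h
    have h' : ((d * i : ℕ) : ZMod m) = ((d * j : ℕ) : ZMod m) := by push_cast; exact h
    have h2 := (ZMod.natCast_eq_natCast_iff _ _ _).mp h'
    rw [← hdm] at h2
    have h3 := Nat.ModEq.mul_left_cancel' hd0 h2
    rwa [Nat.ModEq, Nat.mod_eq_of_lt hi, Nat.mod_eq_of_lt hj] at h3

/-- The vector `σ` with `σ(0) = −(p−1)`, `σ(t) = 1` for nonzero multiples `t` of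
`p^{k−1}`, and `σ(t) = 0` otherwise, is a left eigenvector of the transition
matrix `M_R` on `ℤ/p^kℤ` with eigenvalue `(1−α)(p−1)/p`. -/
theorem stmt18 (p : ℕ) [hp : Fact p.Prime] (k : ℕ) (hk : 1 ≤ k)
    (α : ℝ) (hα0 : 0 < α) (hα1 : α < 1)
    (β : ZMod (p ^ k) → ℝ) (hβ : ∀ x, β x = 1 / (p : ℝ) ^ k)
    (σ : ZMod (p ^ k) → ℝ)
    (hσ0 : σ 0 = -((p : ℝ) - 1))
    (hσ1 : ∀ t : ZMod (p ^ k), t ≠ 0 →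
      (∃ s : ZMod (p ^ k), t = (p : ZMod (p ^ k)) ^ (k - 1) * s) → σ t = 1)
    (hσ2 : ∀ t : ZMod (p ^ k), t ≠ 0 →
      (¬ ∃ s : ZMod (p ^ k), t = (p : ZMod (p ^ k)) ^ (k - 1) * s) → σ t = 0) :
    ∀ b : ZMod (p ^ k),
      ∑ a : ZMod (p ^ k), σ a * Mmat (ZMod (p ^ k)) α β a b =
        (1 - α) * ((p : ℝ) - 1) / (p : ℝ) * σ b := by
  haveI : NeZero (p ^ k) := ⟨pow_ne_zero k hp.out.ne_zero⟩
  haveI : Fact (1 < p ^ k) := ⟨Nat.one_lt_pow (by omega) hp.out.one_lt⟩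
  set c : ZMod (p ^ k) := (p : ZMod (p ^ k)) ^ (k - 1) with hc
  have hcp0 : c * (p : ZMod (p ^ k)) = 0 := by
    rw [hc, ← pow_succ, Nat.sub_add_cancel hk, ← Nat.cast_pow, ZMod.natCast_self]
  -- sigma decomposition
  have hσd : ∀ a : ZMod (p ^ k), σ a =
      (if ∃ s, a = c * s then (1 : ℝ) else 0) - p * (if a = 0 then 1 else 0) := by
    intro a
    by_cases h0 : a = 0
    · subst h0
      rw [hσ0]
      have hex : ∃ s : ZMod (p ^ k), (0 : ZMod (p ^ k)) = c * s := ⟨0, by rw [mul_zero]⟩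
      simp only [hex, if_true, if_pos rfl]
      ring
    · by_cases hPa : ∃ s, a = c * s
      · rw [hσ1 a h0 hPa]; simp [hPa, h0]
      · rw [hσ2 a h0 hPa]; simp [hPa, h0]
  -- cardinality of multiples of p^(k-1)
  have hcardP : (univ.filter (fun a : ZMod (p ^ k) => ∃ s, a = c * s)).card = p := by
    have h2 : ((p ^ (k - 1) : ℕ) : ZMod (p ^ k)) = c := by rw [hc]; push_cast; ring
    have h1 := card_multiples (p ^ k) (p ^ (k - 1)) (pow_dvd_pow p (by omega))
    rw [h2] at h1
    rw [h1, show p ^ k = p ^ (k - 1) * p from by rw [← pow_succ]; congr 1; omega,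
      Nat.mul_div_cancel_left _ (pow_pos hp.out.pos _)]
  -- sum of sigma is zero
  have hsum0 : ∑ a : ZMod (p ^ k), σ a = 0 := by
    simp only [hσd]
    rw [Finset.sum_sub_distrib, ← Finset.mul_sum, Finset.sum_boole, hcardP]
    rw [Finset.sum_ite_eq' univ (0 : ZMod (p ^ k)) (fun _ => (1 : ℝ))]
    simp
  -- nonunits are multiples of p
  have hunit : ∀ x : ZMod (p ^ k), ¬ IsUnit x ↔ ∃ y, x = (p : ZMod (p ^ k)) * y := by
    intro x
    constructor
    · intro hx
      have hx' : ¬ Nat.Coprime x.val (p ^ k) := fun h => hx (by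
        rw [← ZMod.natCast_zmod_val x]; exact (ZMod.isUnit_iff_coprime _ _).mpr h)
      have hpv : p ∣ x.val := by
        by_contra hdvd
        exact hx' (Nat.Coprime.pow_right _
          ((Nat.Prime.coprime_iff_not_dvd hp.out).mpr hdvd).symm)
      refine ⟨((x.val / p : ℕ) : ZMod (p ^ k)), ?_⟩
      rw [← Nat.cast_mul, Nat.mul_div_cancel' hpv, ZMod.natCast_zmod_val]
    · rintro ⟨y, rfl⟩ hu
      have hpu : IsUnit ((p : ZMod (p ^ k))) := isUnit_of_mul_isUnit_left hu
      have h2 : IsUnit ((p : ZMod (p ^ k)) ^ k) := hpu.pow k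
      rw [← Nat.cast_pow, ZMod.natCast_self] at h2
      exact not_isUnit_zero h2
  -- number of units
  have hunits : (univ.filter (fun x : ZMod (p ^ k) => IsUnit x)).card
      = p ^ k - p ^ (k - 1) := by
    have hnon : (univ.filter (fun x : ZMod (p ^ k) => ¬ IsUnit x)).card = p ^ (k - 1) := by
      have he : (univ.filter (fun x : ZMod (p ^ k) => ¬ IsUnit x))
          = univ.filter (fun x : ZMod (p ^ k) => ∃ y, x = (p : ZMod (p ^ k)) * y) := by
        apply Finset.filter_congr; intro x _; simp only [hunit x]
      rw [he, card_multiples (p ^ k) p (dvd_pow_self p (by omega)),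
        show p ^ k = p * p ^ (k - 1) from by rw [← pow_succ']; congr 1; omega,
        Nat.mul_div_cancel_left _ hp.out.pos]
    have htot := Finset.card_filter_add_card_filter_not
      (s := (univ : Finset (ZMod (p ^ k)))) (p := fun x : ZMod (p ^ k) => IsUnit x)
    rw [Finset.card_univ, ZMod.card] at htot
    omega
  intro b
  -- key inner sum
  have key : ∀ x : ZMod (p ^ k),
      ∑ a : ZMod (p ^ k), σ a * (if a * x = b then (1 : ℝ) else 0)
      = (if IsUnit x then (1 : ℝ) else 0) * σ b := by
    intro x
    by_cases hx : IsUnit x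
    · simp only [hx, if_true, one_mul]
      obtain ⟨u, rfl⟩ := hx
      have hbij : ∀ a : ZMod (p ^ k), (a * ↑u = b) ↔ (a = b * ↑u⁻¹) := by
        intro a
        constructor
        · rintro rfl; rw [Units.mul_inv_cancel_right]
        · rintro rfl; rw [Units.inv_mul_cancel_right]
      simp only [hbij, mul_ite, mul_one, mul_zero]
      rw [Finset.sum_ite_eq' univ (b * ↑u⁻¹) σ]
      simp only [Finset.mem_univ, if_true]
      -- σ (b * u⁻¹) = σ b
      have hPu : (∃ s, b * ↑u⁻¹ = c * s) ↔ (∃ s, b = c * s) := by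
        constructor
        · rintro ⟨s, hs⟩
          refine ⟨s * ↑u, ?_⟩
          have h : b * ↑u⁻¹ * ↑u = c * s * ↑u := by rw [hs]
          rwa [Units.inv_mul_cancel_right, mul_assoc] at h
        · rintro ⟨s, rfl⟩
          exact ⟨s * ↑u⁻¹, by rw [mul_assoc]⟩
      have h0u : (b * ↑u⁻¹ = 0) ↔ (b = 0) := by
        constructor
        · intro h
          have h' : b * ↑u⁻¹ * ↑u = 0 * ↑u := by rw [h]
          rwa [Units.inv_mul_cancel_right, zero_mul] at h'
        · rintro rfl; rw [zero_mul]
      rw [hσd (b * ↑u⁻¹), hσd b]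
      simp only [hPu, h0u]
    · simp only [hx, if_false, zero_mul]
      obtain ⟨y, rfl⟩ := (hunit x).mp hx
      have hz : ∀ a : ZMod (p ^ k), (∃ s, a = c * s) →
          a * ((p : ZMod (p ^ k)) * y) = 0 := by
        rintro a ⟨s, rfl⟩
        rw [show c * s * ((p : ZMod (p ^ k)) * y)
          = c * (p : ZMod (p ^ k)) * (s * y) from by ring, hcp0, zero_mul]
      have hterm : ∀ a : ZMod (p ^ k),
          σ a * (if a * ((p : ZMod (p ^ k)) * y) = b then (1 : ℝ) else 0)
          = σ a * (if b = 0 then 1 else 0) := by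
        intro a
        by_cases hPa : ∃ s, a = c * s
        · rw [hz a hPa]
          simp [eq_comm]
        · have ha0 : a ≠ 0 := fun h => hPa ⟨0, by rw [h, mul_zero]⟩
          rw [hσ2 a ha0 hPa, zero_mul, zero_mul]
      rw [Finset.sum_congr rfl (fun a _ => hterm a), ← Finset.sum_mul, hsum0, zero_mul]
  -- main computation
  have hpk0 : ((p : ℝ)) ≠ 0 := Nat.cast_ne_zero.mpr hp.out.ne_zero
  have hpkne : ((p : ℝ) ^ k) ≠ 0 := pow_ne_zero _ hpk0
  have hBval : ∀ a : ZMod (p ^ k), Bmat (ZMod (p ^ k)) β a b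
      = ∑ x : ZMod (p ^ k), (if a * x = b then (1 : ℝ) else 0) * (1 / (p : ℝ) ^ k) := by
    intro a
    rw [Bmat, Finset.sum_filter]
    apply Finset.sum_congr rfl
    intro x _
    rw [hβ x]
    by_cases h : a * x = b <;> simp [h]
  have hcard : (Fintype.card (ZMod (p ^ k)) : ℝ) = (p : ℝ) ^ k := by
    rw [ZMod.card]; push_cast; ring
  calc ∑ a : ZMod (p ^ k), σ a * Mmat (ZMod (p ^ k)) α β a b
      = ∑ a : ZMod (p ^ k), (σ a * (α / (p : ℝ) ^ k)
          + (1 - α) * (σ a * Bmat (ZMod (p ^ k)) β a b)) := by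
        apply Finset.sum_congr rfl
        intro a _
        rw [Mmat]
        rw [hcard]
        ring
    _ = (∑ a : ZMod (p ^ k), σ a) * (α / (p : ℝ) ^ k)
          + (1 - α) * ∑ a : ZMod (p ^ k), σ a * Bmat (ZMod (p ^ k)) β a b := by
        rw [Finset.sum_add_distrib, ← Finset.sum_mul, ← Finset.mul_sum]
    _ = (1 - α) * ∑ a : ZMod (p ^ k), σ a * Bmat (ZMod (p ^ k)) β a b := by
        rw [hsum0]; ring
    _ = (1 - α) * ∑ x : ZMod (p ^ k),
          (∑ a : ZMod (p ^ k), σ a * (if a * x = b then (1 : ℝ) else 0))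
            * (1 / (p : ℝ) ^ k) := by
        congr 1
        simp_rw [hBval, Finset.mul_sum]
        rw [Finset.sum_comm]
        apply Finset.sum_congr rfl
        intro x _
        rw [Finset.sum_mul]
        apply Finset.sum_congr rfl
        intro a _
        ring
    _ = (1 - α) * ∑ x : ZMod (p ^ k),
          (if IsUnit x then (1 : ℝ) else 0) * σ b * (1 / (p : ℝ) ^ k) := by
        congr 1
        exact Finset.sum_congr rfl (fun x _ => by rw [key x])
    _ = (1 - α) * (((univ.filter (fun x : ZMod (p ^ k) => IsUnit x)).card : ℝ)
          * σ b * (1 / (p : ℝ) ^ k)) := by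
        rw [← Finset.sum_mul, ← Finset.sum_mul, Finset.sum_boole]
    _ = (1 - α) * ((p : ℝ) - 1) / (p : ℝ) * σ b := by
        rw [hunits]
        have hle : p ^ (k - 1) ≤ p ^ k := Nat.pow_le_pow_right hp.out.pos (by omega)
        rw [Nat.cast_sub hle]
        push_cast
        have hsplit : (p : ℝ) ^ k = (p : ℝ) ^ (k - 1) * p := by
          rw [← pow_succ]; congr 1; omega
        rw [hsplit]
        field_simp
end
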